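/- Interaction estimate for translated heteroclinics: let H(t)=tanh(t/√2), W(t)=(1-t²)²/4, and A₀=2. For every κ ∈ (0,1) there exists C > 0 such that for all T ≥ 1: |∫_{-∞}^{∞} (W''(H(t)) - 2) H'(t-T) H'(t) dt + 4√2 A₀² e^{-√2 T}| ≤ C e^{-2(1-κ)√2 T}. -/

import Mathlib

open Real MeasureTheory Set Filter Topology

/- ## Auxiliary integrability and integral lemmas -/

lemma aux_exp_Iic {b : ℝ} (hb : 0 < b) (c : ℝ) :
    IntegrableOn (fun t : ℝ => Real.exp (b * t)) (Iic c) := by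
  rw [← (Measure.measurePreserving_neg (volume : Measure ℝ)).integrableOn_comp_preimage
      (Homeomorph.neg ℝ).measurableEmbedding]
  simp only [Function.comp_def, neg_preimage, neg_Iic]
  rw [integrableOn_Ici_iff_integrableOn_Ioi]
  simpa [mul_comm, neg_mul, mul_neg] using exp_neg_integrableOn_Ioi (-c) hb

lemma aux_exp_neg_Ioi {b : ℝ} (hb : 0 < b) (c : ℝ) :
    IntegrableOn (fun t : ℝ => Real.exp (-(b * t))) (Ioi c) := by
  simpa [neg_mul] using exp_neg_integrableOn_Ioi c hb

lemma aux_hd_exp {b : ℝ} (t : ℝ) :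
    HasDerivAt (fun u : ℝ => Real.exp (b * u)) (b * Real.exp (b * t)) t := by
  simpa [mul_comm] using ((hasDerivAt_id t).const_mul b).exp

lemma aux_int_exp_Iic {b : ℝ} (hb : 0 < b) (c : ℝ) :
    ∫ t in Iic c, Real.exp (b * t) = Real.exp (b * c) / b := by
  have h : ∀ t ∈ Iic c, HasDerivAt (fun u : ℝ => Real.exp (b * u) / b) (Real.exp (b * t)) t := by
    intro t _
    simpa [hb.ne'] using (aux_hd_exp (b := b) t).div_const b
  have hlim : Tendsto (fun u : ℝ => Real.exp (b * u) / b) atBot (𝓝 0) := by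
    have h1 : Tendsto (fun u : ℝ => b * u) atBot atBot := tendsto_id.const_mul_atBot hb
    have h2 : Tendsto (fun u : ℝ => Real.exp (b * u)) atBot (𝓝 0) :=
      Real.tendsto_exp_atBot.comp h1
    simpa using h2.div_const b
  have := integral_Iic_of_hasDerivAt_of_tendsto' h (aux_exp_Iic hb c) hlim
  simpa using this

lemma aux_int_exp_neg_Ioi {b : ℝ} (hb : 0 < b) (c : ℝ) :
    ∫ t in Ioi c, Real.exp (-(b * t)) = Real.exp (-(b * c)) / b := by
  have h : ∀ t ∈ Ici c,
      HasDerivAt (fun u : ℝ => -(Real.exp (-(b * u)) / b)) (Real.exp (-(b * t))) t := by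
    intro t _
    have := ((aux_hd_exp (b := -b) t).div_const b).neg
    simp only [neg_mul] at this
    refine this.congr_deriv ?_
    rw [neg_div, neg_neg, mul_div_cancel_left₀ _ hb.ne']
  have hlim : Tendsto (fun u : ℝ => -(Real.exp (-(b * u)) / b)) atTop (𝓝 0) := by
    have h1 : Tendsto (fun u : ℝ => -(b * u)) atTop atBot := by
      exact tendsto_neg_atBot_iff.mpr (tendsto_id.const_mul_atTop hb)
    have h2 : Tendsto (fun u : ℝ => Real.exp (-(b * u))) atTop (𝓝 0) :=
      Real.tendsto_exp_atBot.comp h1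
    simpa using (h2.div_const b).neg
  have := integral_Ioi_of_hasDerivAt_of_tendsto' h (aux_exp_neg_Ioi hb c) hlim
  rw [this]; ring

lemma aux_glue {f : ℝ → ℝ} {b : ℝ} (hb : 0 < b) (hc : Continuous f)
    (h1 : ∀ t, |f t| ≤ 96 * Real.exp (b * t)) (h2 : ∀ t, |f t| ≤ 96 * Real.exp (-(b * t))) :
    Integrable f := by
  rw [← integrableOn_univ, ← Set.Iic_union_Ioi (a := (0 : ℝ)), integrableOn_union]
  constructor
  · exact ((aux_exp_Iic hb 0).const_mul 96).mono' hc.aestronglyMeasurable.restrict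
      (Filter.Eventually.of_forall fun t => by simpa using h1 t)
  · exact ((aux_exp_neg_Ioi hb 0).const_mul 96).mono' hc.aestronglyMeasurable.restrict
      (Filter.Eventually.of_forall fun t => by simpa using h2 t)

/- ## tanh lemmas -/

lemma aux_tanh_exp (u : ℝ) :
    Real.tanh u = (Real.exp (2 * u) - 1) / (Real.exp (2 * u) + 1) := by
  have h2 : Real.exp (2 * u) = Real.exp u * Real.exp u := by
    rw [← Real.exp_add]; ring_nf
  rw [Real.tanh_eq_sinh_div_cosh, Real.sinh_eq, Real.cosh_eq, Real.exp_neg, h2]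
  have h0 : Real.exp u ≠ 0 := (Real.exp_pos u).ne'
  have h1 : Real.exp u * Real.exp u + 1 ≠ 0 := by positivity
  have h3 : Real.exp u + (Real.exp u)⁻¹ ≠ 0 := by positivity
  field_simp

lemma aux_tanh_eq {s : ℝ} (hs0 : 0 < s) (hs2 : s * s = 2) (u : ℝ) :
    Real.tanh (u / s) = (Real.exp (s * u) - 1) / (Real.exp (s * u) + 1) := by
  rw [aux_tanh_exp]
  have : 2 * (u / s) = s * u := by
    field_simp; linear_combination (-u) * hs2
  rw [this]

lemma aux_hd_tanh {s : ℝ} (hs0 : 0 < s) (hs2 : s * s = 2) (t : ℝ) :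
    HasDerivAt (fun u : ℝ => Real.tanh (u / s))
      (2 * s * Real.exp (s * t) / (Real.exp (s * t) + 1) ^ 2) t := by
  have hfe : (fun u : ℝ => Real.tanh (u / s))
      = fun u : ℝ => (Real.exp (s * u) - 1) / (Real.exp (s * u) + 1) :=
    funext fun u => aux_tanh_eq hs0 hs2 u
  rw [hfe]
  have he : HasDerivAt (fun u : ℝ => Real.exp (s * u)) (s * Real.exp (s * t)) t :=
    aux_hd_exp t
  have hne : Real.exp (s * t) + 1 ≠ 0 := by positivity
  have h := (he.sub_const 1).div (he.add_const 1) hne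
  refine h.congr_deriv ?_
  ring

/- ## pointwise algebraic bounds -/

lemma aux_pow34 {x : ℝ} (hx : 0 < x) : x ^ 3 ≤ (x + 1) ^ 4 := by nlinarith [hx.le, sq_nonneg x, pow_pos hx 3, pow_pos hx 2]

lemma aux_pow44 {x : ℝ} (hx : 0 < x) : x ^ 4 ≤ (x + 1) ^ 4 :=
  pow_le_pow_left₀ hx.le (by linarith) 4

lemma aux_pow14 {x : ℝ} (hx : 0 < x) : x ≤ (x + 1) ^ 4 := by nlinarith [hx.le, sq_nonneg x, pow_pos hx 3, pow_pos hx 2, sq_nonneg (x+1)]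

lemma aux_pow12 {y : ℝ} (hy : 0 < y) : y ≤ (y + 1) ^ 2 := by nlinarith [hy.le]

lemma aux_e1 {x y : ℝ} (hx : 0 < x) (hy : 0 < y) :
    96 * (x ^ 2 * y) / ((x + 1) ^ 4 * (y + 1) ^ 2) ≤ 96 * x := by
  rw [div_le_iff₀ (by positivity)]
  have c3 := mul_le_mul (aux_pow14 hx) (aux_pow12 hy) hy.le (by positivity)
  nlinarith [mul_le_mul_of_nonneg_left c3 (by positivity : (0:ℝ) ≤ 96 * x)]

lemma aux_e2 {x y : ℝ} (hx : 0 < x) (hy : 0 < y) :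
    96 * (x ^ 2 * y) / ((x + 1) ^ 4 * (y + 1) ^ 2) ≤ 96 * x⁻¹ := by
  have h : (96 : ℝ) * x⁻¹ = 96 / x := by ring
  rw [h, div_le_div_iff₀ (by positivity) hx]
  have c3 := mul_le_mul (aux_pow34 hx) (aux_pow12 hy) hy.le (by positivity)
  nlinarith [mul_le_mul_of_nonneg_left c3 (by positivity : (0:ℝ) ≤ 96)]

lemma aux_p1 {x : ℝ} (hx : 0 < x) : |x ^ 3 / (x + 1) ^ 4| ≤ 96 * x := by
  rw [abs_of_nonneg (by positivity), div_le_iff₀ (by positivity)]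
  nlinarith [mul_le_mul_of_nonneg_left (aux_pow12 hx) (by positivity : (0:ℝ) ≤ 96 * x * (x+1)^2), pow_pos hx 3, mul_pos hx (pow_pos (by linarith : (0:ℝ) < x + 1) 4), aux_pow34 hx, mul_le_mul_of_nonneg_left (aux_pow34 hx) (by norm_num : (0:ℝ) ≤ 95)]

lemma aux_p2 {x : ℝ} (hx : 0 < x) : |x ^ 3 / (x + 1) ^ 4| ≤ 96 * x⁻¹ := by
  rw [abs_of_nonneg (by positivity)]
  have h : (96 : ℝ) * x⁻¹ = 96 / x := by ring
  rw [h, div_le_div_iff₀ (by positivity) hx]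
  nlinarith [aux_pow44 hx, mul_le_mul_of_nonneg_left (aux_pow44 hx) (by norm_num : (0:ℝ) ≤ 95)]

lemma aux_b1 {y a : ℝ} (hy : 0 < y) (ha : 1 ≤ a) :
    96 * ((y * a) ^ 2 * y ^ 2 * (y + 2)) / (((y * a) + 1) ^ 4 * (y + 1) ^ 2)
      ≤ 192 / a ^ 2 * (y * a) := by
  have ha0 : 0 < a := lt_of_lt_of_le one_pos ha
  have h : (192 : ℝ) / a ^ 2 * (y * a) = 192 * y / a := by field_simp
  rw [h, div_le_div_iff₀ (by positivity) ha0]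
  have c1 : (y * a) ^ 3 ≤ ((y * a) + 1) ^ 4 := aux_pow34 (by positivity)
  have c2 : y + 2 ≤ 2 * (y + 1) ^ 2 := by nlinarith [hy.le]
  have c3 := mul_le_mul c1 c2 (by linarith) (by positivity)
  nlinarith [mul_le_mul_of_nonneg_left c3 (by positivity : (0:ℝ) ≤ 96 * y)]

lemma aux_b2 {y a : ℝ} (hy : 0 < y) (ha : 1 ≤ a) :
    96 * ((y * a) ^ 2 * y ^ 2 * (y + 2)) / (((y * a) + 1) ^ 4 * (y + 1) ^ 2)
      ≤ 192 / a ^ 2 := by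
  have ha0 : 0 < a := lt_of_lt_of_le one_pos ha
  rw [div_le_div_iff₀ (by positivity) (by positivity)]
  have c1 : (y * a) ^ 4 ≤ ((y * a) + 1) ^ 4 := aux_pow44 (by positivity)
  have c2 : y + 2 ≤ 2 * (y + 1) ^ 2 := by nlinarith [hy.le]
  have c3 := mul_le_mul c1 c2 (by linarith) (by positivity)
  nlinarith [mul_le_mul_of_nonneg_left c3 (by positivity : (0:ℝ) ≤ 96)]

lemma aux_b3 {y a : ℝ} (hy : 0 < y) (ha : 1 ≤ a) :
    96 * ((y * a) ^ 2 * y ^ 2 * (y + 2)) / (((y * a) + 1) ^ 4 * (y + 1) ^ 2)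
      ≤ 96 / a * (y * a)⁻¹ := by
  have ha0 : 0 < a := lt_of_lt_of_le one_pos ha
  have h : (96 : ℝ) / a * (y * a)⁻¹ = 96 / (a * (y * a)) := by field_simp
  rw [h, div_le_div_iff₀ (by positivity) (by positivity)]
  have c4 : y * (y + 2) ≤ (y + 1) ^ 2 := by nlinarith
  have c5 : (y * a) ^ 4 ≤ ((y * a) + 1) ^ 4 := aux_pow44 (by positivity)
  have c3 := mul_le_mul c5 c4 (by positivity) (by positivity)
  nlinarith [mul_le_mul_of_nonneg_left c3 (by positivity : (0:ℝ) ≤ 96)]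

theorem translated_heteroclinic_interaction
    (H : ℝ → ℝ) (hH : H = fun t => Real.tanh (t / Real.sqrt 2))
    (A₀ : ℝ) (hA₀ : A₀ = 2) :
    ∀ κ ∈ Set.Ioo (0 : ℝ) 1, ∃ C > (0 : ℝ), ∀ T : ℝ, 1 ≤ T →
      |(∫ t : ℝ, ((3 * (H t) ^ 2 - 1) - 2) * deriv H (t - T) * deriv H t)
          + 4 * Real.sqrt 2 * A₀ ^ 2 * Real.exp (-(Real.sqrt 2) * T)|
        ≤ C * Real.exp (-(2 * (1 - κ) * Real.sqrt 2) * T) := by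
  intro κ hκ
  set s : ℝ := Real.sqrt 2 with hsdef
  have hs0 : (0 : ℝ) < s := Real.sqrt_pos.mpr (by norm_num)
  have hs2 : s * s = 2 := Real.mul_self_sqrt (by norm_num)
  have hs1 : 1 ≤ s := by nlinarith
  obtain ⟨hκ0, hκ1⟩ := hκ
  refine ⟨480 / (2 * κ * s), div_pos (by norm_num) (by positivity), ?_⟩
  intro T hT
  set a : ℝ := Real.exp (s * T) with hadef
  have ha0 : 0 < a := Real.exp_pos _
  have ha1 : 1 ≤ a := Real.one_le_exp (by positivity)
  -- derivative of H
  have hdH : ∀ t : ℝ, deriv H t = 2 * s * Real.exp (s * t) / (Real.exp (s * t) + 1) ^ 2 := by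
    intro t
    rw [hH]
    exact (aux_hd_tanh hs0 hs2 t).deriv
  have hHval : ∀ t : ℝ, H t = (Real.exp (s * t) - 1) / (Real.exp (s * t) + 1) := by
    intro t; rw [hH]; exact aux_tanh_eq hs0 hs2 t
  -- explicit integrand
  set E : ℝ → ℝ := fun t =>
    -96 * (Real.exp (s * t) ^ 2 * Real.exp (s * (t - T)))
      / ((Real.exp (s * t) + 1) ^ 4 * (Real.exp (s * (t - T)) + 1) ^ 2) with hEdef
  set P : ℝ → ℝ := fun t => Real.exp (s * t) ^ 3 / (Real.exp (s * t) + 1) ^ 4 with hPdef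
  set G : ℝ → ℝ := fun t => -96 / a * P t with hGdef
  have hXY : ∀ t : ℝ, Real.exp (s * t) = Real.exp (s * (t - T)) * a := by
    intro t; rw [hadef, ← Real.exp_add]; ring_nf
  have hF : ∀ t : ℝ, ((3 * (H t) ^ 2 - 1) - 2) * deriv H (t - T) * deriv H t = E t := by
    intro t
    rw [hHval t, hdH, hdH, hEdef]
    have h96 : (-96 : ℝ) = -24 * (s * s) * 2 := by rw [hs2]; norm_num
    have h1 : Real.exp (s * t) + 1 ≠ 0 := by positivity
    have h2 : Real.exp (s * (t - T)) + 1 ≠ 0 := by positivity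
    rw [h96]
    field_simp
    ring
  have hsub : ∀ t : ℝ, E t - G t =
      96 * (Real.exp (s * t) ^ 2 * Real.exp (s * (t - T)) ^ 2 * (Real.exp (s * (t - T)) + 2))
        / ((Real.exp (s * t) + 1) ^ 4 * (Real.exp (s * (t - T)) + 1) ^ 2) := by
    intro t
    rw [hEdef, hGdef]
    simp only [hPdef]
    rw [hXY t]
    have h1 : Real.exp (s * (t - T)) * a + 1 ≠ 0 := by positivity
    have h2 : Real.exp (s * (t - T)) + 1 ≠ 0 := by positivity
    field_simp
    ring
  -- nonnegativity and bounds
  have hge : ∀ t : ℝ, 0 ≤ E t - G t := by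
    intro t; rw [hsub t]; positivity
  have hb1 : ∀ t : ℝ, E t - G t ≤ 192 / a ^ 2 * Real.exp (s * t) := by
    intro t; rw [hsub t, hXY t]; exact aux_b1 (Real.exp_pos _) ha1
  have hb2 : ∀ t : ℝ, E t - G t ≤ 192 / a ^ 2 := by
    intro t; rw [hsub t, hXY t]; exact aux_b2 (Real.exp_pos _) ha1
  have hb3 : ∀ t : ℝ, E t - G t ≤ 96 / a * Real.exp (-(s * t)) := by
    intro t; rw [hsub t, Real.exp_neg, hXY t]; exact aux_b3 (Real.exp_pos _) ha1
  -- integrability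
  have hEcont : Continuous E := by
    rw [hEdef]
    apply Continuous.div
    · fun_prop
    · fun_prop
    · intro t; positivity
  have hPcont : Continuous P := by
    rw [hPdef]
    apply Continuous.div
    · fun_prop
    · fun_prop
    · intro t; positivity
  have hEabs : ∀ t : ℝ, |E t| = 96 * (Real.exp (s * t) ^ 2 * Real.exp (s * (t - T)))
      / ((Real.exp (s * t) + 1) ^ 4 * (Real.exp (s * (t - T)) + 1) ^ 2) := by
    intro t
    rw [hEdef]
    simp only
    rw [show -96 * (Real.exp (s * t) ^ 2 * Real.exp (s * (t - T)))
      / ((Real.exp (s * t) + 1) ^ 4 * (Real.exp (s * (t - T)) + 1) ^ 2)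
      = -(96 * (Real.exp (s * t) ^ 2 * Real.exp (s * (t - T)))
      / ((Real.exp (s * t) + 1) ^ 4 * (Real.exp (s * (t - T)) + 1) ^ 2)) by ring,
      abs_neg, abs_of_nonneg (by positivity)]
  have hEint : Integrable E := by
    apply aux_glue hs0 hEcont
    · intro t; rw [hEabs t]; exact aux_e1 (Real.exp_pos _) (Real.exp_pos _)
    · intro t
      rw [hEabs t, Real.exp_neg]
      exact aux_e2 (Real.exp_pos _) (Real.exp_pos _)
  have hPint : Integrable P := by
    apply aux_glue hs0 hPcont
    · intro t; exact aux_p1 (Real.exp_pos _)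
    · intro t; rw [Real.exp_neg]; exact aux_p2 (Real.exp_pos _)
  have hGint : Integrable G := by
    rw [hGdef]
    exact hPint.const_mul _
  -- FTC computation of ∫ P
  have hI : ∀ t : ℝ, HasDerivAt (fun u : ℝ => (Real.exp (s * u) + 1)⁻¹)
      (-(s * Real.exp (s * t)) / (Real.exp (s * t) + 1) ^ 2) t := by
    intro t
    exact ((aux_hd_exp t).add_const 1).inv (by positivity)
  set Φ : ℝ → ℝ := fun t => (1 / s) * (-((Real.exp (s * t) + 1)⁻¹)
      + ((Real.exp (s * t) + 1)⁻¹) ^ 2 - (1 / 3) * ((Real.exp (s * t) + 1)⁻¹) ^ 3) with hΦdef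
  have hΦ : ∀ t : ℝ, HasDerivAt Φ (P t) t := by
    intro t
    have h := ((((hI t).neg.add ((hI t).pow 2)).sub
      (((hI t).pow 3).const_mul (1 / 3))).const_mul (1 / s))
    refine h.congr_deriv ?_
    rw [hPdef]
    simp only
    have h1 : Real.exp (s * t) + 1 ≠ 0 := by positivity
    simp only [inv_pow]
    field_simp
    ring
  have hX0 : Tendsto (fun t : ℝ => Real.exp (s * t)) atBot (𝓝 0) :=
    Real.tendsto_exp_atBot.comp (tendsto_id.const_mul_atBot hs0)
  have hI1 : Tendsto (fun t : ℝ => (Real.exp (s * t) + 1)⁻¹) atBot (𝓝 1) := by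
    have := (hX0.add_const 1).inv₀ (by norm_num)
    simpa using this
  have hbot : Tendsto Φ atBot (𝓝 ((1 / s) * (-(1 : ℝ) + 1 ^ 2 - (1 / 3) * 1 ^ 3))) :=
    ((hI1.neg.add (hI1.pow 2)).sub ((hI1.pow 3).const_mul (1 / 3))).const_mul (1 / s)
  have hI0 : Tendsto (fun t : ℝ => (Real.exp (s * t) + 1)⁻¹) atTop (𝓝 0) :=
    tendsto_inv_atTop_zero.comp (tendsto_atTop_add_const_right _ 1
      (Real.tendsto_exp_atTop.comp (tendsto_id.const_mul_atTop hs0)))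
  have htop : Tendsto Φ atTop (𝓝 ((1 / s) * (-(0 : ℝ) + 0 ^ 2 - (1 / 3) * 0 ^ 3))) :=
    ((hI0.neg.add (hI0.pow 2)).sub ((hI0.pow 3).const_mul (1 / 3))).const_mul (1 / s)
  have hIP : ∫ t : ℝ, P t = 1 / (3 * s) := by
    rw [integral_of_hasDerivAt_of_tendsto hΦ hPint hbot htop]
    field_simp
    ring
  have hIG : ∫ t : ℝ, G t = -(16 * s * a⁻¹) := by
    simp only [hGdef]
    rw [MeasureTheory.integral_const_mul, hIP]
    have haa : a * a⁻¹ = 1 := mul_inv_cancel₀ ha0.ne'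
    field_simp
    linear_combination 48 * hs2
  -- rewrite goal integrand
  have hEG : Integrable (fun t : ℝ => E t - G t) := hEint.sub hGint
  have hgoal1 : (∫ t : ℝ, (3 * H t ^ 2 - 1 - 2) * deriv H (t - T) * deriv H t)
      = ∫ t : ℝ, E t := by
    congr 1
    funext t
    exact hF t
  have hexp : Real.exp (-s * T) = a⁻¹ := by rw [neg_mul, Real.exp_neg]
  have hval : (∫ t : ℝ, (3 * H t ^ 2 - 1 - 2) * deriv H (t - T) * deriv H t)
      + 4 * s * (2 : ℝ) ^ 2 * Real.exp (-s * T) = ∫ t : ℝ, (E t - G t) := by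
    rw [hgoal1, integral_sub hEint hGint, hIG, hexp]
    ring
  rw [hA₀, hval, abs_of_nonneg (integral_nonneg hge)]
  -- split the integral
  have hsplit1 : ∫ t : ℝ, (E t - G t)
      = (∫ t in Iic T, (E t - G t)) + ∫ t in Ioi T, (E t - G t) := by
    rw [← setIntegral_univ, ← Set.Iic_union_Ioi (a := T),
      setIntegral_union (Iic_disjoint_Ioi le_rfl) measurableSet_Ioi
        hEG.integrableOn hEG.integrableOn]
  have hsplit2 : ∫ t in Iic T, (E t - G t)
      = (∫ t in Iic 0, (E t - G t)) + ∫ t in Ioc 0 T, (E t - G t) := by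
    rw [← Set.Iic_union_Ioc_eq_Iic (by linarith : (0 : ℝ) ≤ T),
      setIntegral_union (Iic_disjoint_Ioc le_rfl) measurableSet_Ioc
        hEG.integrableOn hEG.integrableOn]
  -- three bounds
  have hbd1 : ∫ t in Iic 0, (E t - G t) ≤ 192 / a ^ 2 * (1 / s) := by
    calc ∫ t in Iic 0, (E t - G t)
        ≤ ∫ t in Iic 0, 192 / a ^ 2 * Real.exp (s * t) :=
          setIntegral_mono_on hEG.integrableOn ((aux_exp_Iic hs0 0).const_mul _)
            measurableSet_Iic (fun t _ => hb1 t)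
      _ = 192 / a ^ 2 * (Real.exp (s * 0) / s) := by
          rw [MeasureTheory.integral_const_mul, aux_int_exp_Iic hs0]
      _ = 192 / a ^ 2 * (1 / s) := by norm_num
  have hbd2 : ∫ t in Ioc 0 T, (E t - G t) ≤ T * (192 / a ^ 2) := by
    calc ∫ t in Ioc 0 T, (E t - G t)
        ≤ ∫ _t in Ioc (0 : ℝ) T, (192 / a ^ 2 : ℝ) :=
          setIntegral_mono_on hEG.integrableOn
            (integrableOn_const (by rw [Real.volume_Ioc]; exact ENNReal.ofReal_ne_top))
            measurableSet_Ioc (fun t _ => hb2 t)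
      _ = T * (192 / a ^ 2) := by
          rw [setIntegral_const, Real.volume_real_Ioc_of_le (by linarith : (0 : ℝ) ≤ T), smul_eq_mul]
          ring
  have hbd3 : ∫ t in Ioi T, (E t - G t) ≤ 96 / a * (a⁻¹ / s) := by
    calc ∫ t in Ioi T, (E t - G t)
        ≤ ∫ t in Ioi T, 96 / a * Real.exp (-(s * t)) :=
          setIntegral_mono_on hEG.integrableOn ((aux_exp_neg_Ioi hs0 T).const_mul _)
            measurableSet_Ioi (fun t _ => hb3 t)
      _ = 96 / a * (Real.exp (-(s * T)) / s) := by
          rw [MeasureTheory.integral_const_mul, aux_int_exp_neg_Ioi hs0]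
      _ = 96 / a * (a⁻¹ / s) := by rw [Real.exp_neg]
  -- combine
  have hs1' : 1 / s ≤ 1 := by rw [div_le_one hs0]; exact hs1
  have htot : ∫ t : ℝ, (E t - G t) ≤ 480 * T / a ^ 2 := by
    rw [hsplit1, hsplit2]
    have e3 : 96 / a * (a⁻¹ / s) = 96 / a ^ 2 * (1 / s) := by
      field_simp
    have b1' : 192 / a ^ 2 * (1 / s) ≤ 192 / a ^ 2 * T :=
      mul_le_mul_of_nonneg_left (hs1'.trans hT) (by positivity)
    have b3' : 96 / a ^ 2 * (1 / s) ≤ 96 / a ^ 2 * T :=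
      mul_le_mul_of_nonneg_left (hs1'.trans hT) (by positivity)
    have := hbd3
    rw [e3] at this
    have hT1 : 192 / a ^ 2 * T + T * (192 / a ^ 2) + 96 / a ^ 2 * T = 480 * T / a ^ 2 := by
      ring
    linarith [hbd1, hbd2, this, b1', b3']
  refine htot.trans ?_
  -- final exponential comparison
  have hxe : 2 * κ * s * T ≤ Real.exp (2 * κ * s * T) := by
    linarith [Real.add_one_le_exp (2 * κ * s * T)]
  have ha2 : a ^ 2 = Real.exp (s * T + s * T) := by
    rw [Real.exp_add, hadef]
    ring
  have hrhs : Real.exp (-(2 * (1 - κ) * s) * T) = Real.exp (2 * κ * s * T) / a ^ 2 := by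
    rw [ha2, ← Real.exp_sub]
    congr 1
    ring
  rw [hrhs, mul_div_assoc', div_le_div_iff₀ (by positivity) (by positivity)]
  have h2ks : 0 < 2 * κ * s := by positivity
  rw [← mul_le_mul_iff_of_pos_right h2ks]
  have hcan : 480 / (2 * κ * s) * Real.exp (2 * κ * s * T) * a ^ 2 * (2 * κ * s)
      = 480 * Real.exp (2 * κ * s * T) * a ^ 2 := by
    field_simp
  rw [hcan]
  nlinarith [mul_le_mul_of_nonneg_left hxe (by positivity : (0 : ℝ) ≤ 480 * a ^ 2)]
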